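/- Let B be a prime Banach algebra over ℝ, let H₁ and H₂ be non-empty open subsets of B, and let f : B → B be a continuous automorphism. Suppose that for every (x, y) ∈ H₁ × H₂ there exist positive integers p = p(x,y) ≥ 1 and q = q(x,y) ≥ 1 such that f(xᵖ∘yᵠ) − [xᵖ, yᵠ] ∈ Z(B). Then B is commutative. -/

import Mathlib

open Finset

/-- Pigeonhole: an uncountable set of reals admitting a choice of a pair of naturals
has an infinite fiber. -/
private lemma pigeon_aux {T : Set ℝ} (hT : ¬ T.Countable) (P : ℝ → ℕ → ℕ → Prop)
    (h : ∀ t ∈ T, ∃ p q, P t p q) :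
    ∃ p q, {t ∈ T | P t p q}.Infinite := by
  by_contra hcon
  push_neg at hcon
  apply hT
  have hsub : T ⊆ ⋃ v : ℕ × ℕ, {t ∈ T | P t v.1 v.2} := by
    intro t ht
    obtain ⟨p, q, hpq⟩ := h t ht
    exact Set.mem_iUnion.2 ⟨(p, q), ht, hpq⟩
  refine Set.Countable.mono hsub (Set.countable_iUnion ?_)
  intro v
  have hv := hcon v.1 v.2
  exact hv.countable

private lemma Ioo_not_countable {a b : ℝ} (h : a < b) : ¬ (Set.Ioo a b).Countable := by
  intro hc
  have h1 : Cardinal.mk (Set.Ioo a b) ≤ Cardinal.aleph0 := by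
    rw [Cardinal.mk_le_aleph0_iff, ← Set.countable_coe_iff] at *
    exact hc
  rw [Cardinal.mk_Ioo_real h] at h1
  exact absurd h1 Cardinal.aleph0_lt_continuum.not_ge

/-- Coefficient extraction: a B-valued polynomial vanishing on an infinite set of reals
has all coefficients zero. -/
private lemma vanish_coeffs {B : Type*} [NormedRing B] [NormedSpace ℝ B]
    (n : ℕ) (c : ℕ → B) (T : Set ℝ) (hT : T.Infinite)
    (h : ∀ t ∈ T, ∑ k ∈ Finset.range (n + 1), t ^ k • c k = 0) :
    ∀ k ≤ n, c k = 0 := by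
  intro k hk
  apply NormedSpace.eq_zero_of_forall_dual_eq_zero ℝ
  intro φ
  set P : Polynomial ℝ := ∑ j ∈ Finset.range (n + 1), Polynomial.C (φ (c j)) * Polynomial.X ^ j
    with hP
  have hP0 : P = 0 := by
    apply Polynomial.eq_zero_of_infinite_isRoot
    apply hT.mono
    intro t ht
    have h1 := congrArg φ (h t ht)
    simp only [map_sum, map_smul, smul_eq_mul, map_zero] at h1
    simp only [Set.mem_setOf_eq, Polynomial.IsRoot, hP, Polynomial.eval_finset_sum,
      Polynomial.eval_mul, Polynomial.eval_C, Polynomial.eval_pow, Polynomial.eval_X]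
    rw [← h1]
    exact Finset.sum_congr rfl fun j _ => mul_comm _ _
  have h2 := congrArg (fun p => Polynomial.coeff p k) hP0
  simp only [hP, Polynomial.finset_sum_coeff, Polynomial.coeff_C_mul, Polynomial.coeff_X_pow,
    Polynomial.coeff_zero, mul_ite, mul_one, mul_zero] at h2
  rwa [Finset.sum_ite_eq (Finset.range (n + 1)) k (fun j => φ (c j)),
    if_pos (Finset.mem_range.2 (Nat.lt_succ_of_le hk))] at h2

/-- Expansion of `(y + t • b) ^ q` as a polynomial in `t` with leading coefficient `b ^ q`. -/
private lemma pow_expand {B : Type*} [NormedRing B] [NormedAlgebra ℝ B] (y b : B) :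
    ∀ q : ℕ, ∃ c : ℕ → B, c q = b ^ q ∧
      ∀ t : ℝ, (y + t • b) ^ q = ∑ k ∈ Finset.range (q + 1), t ^ k • c k := by
  intro q
  induction q with
  | zero =>
    refine ⟨fun k => if k = 0 then 1 else 0, by simp, ?_⟩
    intro t
    simp
  | succ q ih =>
    obtain ⟨c, hcq, hc⟩ := ih
    refine ⟨fun k => (if k ≤ q then c k * y else 0) +
      (if k = 0 then 0 else c (k - 1) * b), ?_, ?_⟩
    · simp only [Nat.succ_ne_zero, if_false, Nat.add_sub_cancel, hcq]
      rw [if_neg (by omega), zero_add, pow_succ]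
    · intro t
      have key : (y + t • b) ^ (q + 1) = ((y + t • b) ^ q) * (y + t • b) := pow_succ _ _
      rw [key, hc t, mul_add, Finset.sum_mul, Finset.sum_mul]
      have h1 : ∑ k ∈ Finset.range (q + 1), t ^ k • c k * y
          = ∑ k ∈ Finset.range (q + 2), t ^ k • (if k ≤ q then c k * y else 0) := by
        rw [Finset.sum_range_succ (fun k => t ^ k • (if k ≤ q then c k * y else 0)) (q + 1),
          if_neg (by omega : ¬ q + 1 ≤ q), smul_zero, add_zero]
        refine Finset.sum_congr rfl fun k hk => ?_
        rw [if_pos (by simpa [Nat.lt_succ_iff] using hk : k ≤ q), smul_mul_assoc]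
      have h2 : ∑ k ∈ Finset.range (q + 1), t ^ k • c k * (t • b)
          = ∑ k ∈ Finset.range (q + 2), t ^ k • (if k = 0 then 0 else c (k - 1) * b) := by
        rw [Finset.sum_range_succ' (fun k => t ^ k • (if k = 0 then (0:B) else c (k - 1) * b))
          (q + 1)]
        simp only [Nat.succ_ne_zero, if_false, if_true, pow_zero, Nat.add_sub_cancel,
          ite_true, ite_false, reduceIte, smul_zero, add_zero, one_smul]
        refine Finset.sum_congr rfl fun k hk => ?_
        rw [smul_mul_assoc, mul_smul_comm, smul_smul, pow_succ]
      rw [h1, h2, ← Finset.sum_add_distrib]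
      exact Finset.sum_congr rfl fun k _ => by rw [smul_add]


private lemma pow_expand_one {B : Type*} [NormedRing B] [NormedAlgebra ℝ B] (b : B) (q : ℕ)
    (t : ℝ) :
    (b + t • 1) ^ q = ∑ j ∈ Finset.range (q + 1), t ^ j • ((q.choose (q - j)) • b ^ (q - j)) := by
  have hcomm : Commute b (t • (1 : B)) := (Commute.one_right b).smul_right t
  rw [hcomm.add_pow, ← Finset.sum_range_reflect]
  refine Finset.sum_congr rfl fun j hj => ?_
  have hj' : j ≤ q := Nat.lt_succ_iff.1 (Finset.mem_range.1 hj)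
  have h1 : q + 1 - 1 - j = q - j := by omega
  have h2 : q - (q - j) = j := by omega
  rw [h1, h2, smul_pow, one_pow, mul_smul_comm, mul_one, smul_mul_assoc]
  congr 1
  rw [nsmul_eq_mul, (Nat.cast_commute (q.choose (q - j)) (b ^ (q - j))).eq]
/-- Theorem: a prime real Banach algebra admitting a continuous automorphism `f` with
`f(x^p ∘ y^q) − [x^p, y^q] ∈ Z(B)` on a product of nonempty open sets is commutative. -/
theorem prime_banach_comm_of_auto_anticomm_sub_comm
    {B : Type*} [NormedRing B] [NormedAlgebra ℝ B] [CompleteSpace B]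
    (hprime : ∀ x y : B, (∀ z : B, x * z * y = 0) → x = 0 ∨ y = 0)
    (H₁ H₂ : Set B) (hH₁ : H₁.Nonempty) (hH₂ : H₂.Nonempty)
    (hH₁o : IsOpen H₁) (hH₂o : IsOpen H₂)
    (f : B → B) (hfcont : Continuous f) (hfbij : Function.Bijective f)
    (hfadd : ∀ x y : B, f (x + y) = f x + f y)
    (hfmul : ∀ x y : B, f (x * y) = f x * f y)
    (hmain : ∀ x ∈ H₁, ∀ y ∈ H₂, ∃ p q : ℕ, 0 < p ∧ 0 < q ∧
      ∀ b : B, (f (x ^ p * y ^ q + y ^ q * x ^ p) - (x ^ p * y ^ q - y ^ q * x ^ p)) * b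
        = b * (f (x ^ p * y ^ q + y ^ q * x ^ p) - (x ^ p * y ^ q - y ^ q * x ^ p))) :
    ∀ x y : B, x * y = y * x := by
  by_cases h10 : (1 : B) = 0
  · intro x y
    have hall : ∀ a : B, a = 0 := fun a => by rw [← mul_one a, h10, mul_zero]
    rw [hall (x * y), hall (y * x)]
  have h1pos : (0 : ℝ) < ‖(1 : B)‖ := norm_pos_iff.mpr h10
  have hsmulf : ∀ (t : ℝ) (x : B), f (t • x) = t • f x := fun t x =>
    map_real_smul (AddMonoidHom.mk' f hfadd) hfcont t x
  have hfsum : ∀ (s : Finset ℕ) (g : ℕ → B), f (∑ k ∈ s, g k) = ∑ k ∈ s, f (g k) :=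
    fun s g => map_sum (AddMonoidHom.mk' f hfadd) g s
  have hf1 : f 1 = 1 := by
    obtain ⟨a, ha⟩ := hfbij.2 1
    have h := hfmul 1 a
    rw [one_mul, ha] at h
    exact (h.trans (mul_one _)).symm
  have hcancel : ∀ (r : ℝ), r ≠ 0 → ∀ x z : B, r • x = r • z → x = z := by
    intro r hr x z h
    have h2 := congrArg (fun w => r⁻¹ • w) h
    simpa [smul_smul, inv_mul_cancel₀ hr] using h2
  have hZtwo : ∀ z : B, (∀ b, (z + z) * b = b * (z + z)) → ∀ b, z * b = b * z := by
    intro z hz b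
    have h := hz b
    rw [add_mul, mul_add] at h
    refine hcancel 2 two_ne_zero _ _ ?_
    rw [two_smul, two_smul, h]
  have hZf : ∀ z : B, (∀ b, f z * b = b * f z) → ∀ b, z * b = b * z := by
    intro z hz b
    apply hfbij.1
    rw [hfmul, hfmul, hz (f b)]
  -- Step 1: every `y ∈ H₂` has a central power.
  have step1 : ∀ y ∈ H₂, ∃ q : ℕ, 0 < q ∧ ∀ b : B, y ^ q * b = b * y ^ q := by
    intro y hy
    obtain ⟨x₀, hx₀⟩ := hH₁
    obtain ⟨ε, hε, hball⟩ := Metric.isOpen_iff.1 hH₁o x₀ hx₀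
    set δ := ε / ‖(1 : B)‖ with hδ
    have hδpos : 0 < δ := div_pos hε h1pos
    have hmem : ∀ t ∈ Set.Ioo (-δ) δ, x₀ + t • (1 : B) ∈ H₁ := by
      intro t ht
      apply hball
      rw [Metric.mem_ball, dist_eq_norm, add_sub_cancel_left, norm_smul, Real.norm_eq_abs]
      have habs : |t| < δ := abs_lt.2 ⟨ht.1, ht.2⟩
      have := mul_lt_mul_of_pos_right habs h1pos
      rwa [hδ, div_mul_cancel₀ _ (ne_of_gt h1pos)] at this
    obtain ⟨p, q, hS⟩ := pigeon_aux (Ioo_not_countable (by linarith))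
      (fun t p q => 0 < p ∧ 0 < q ∧ ∀ b : B,
        (f ((x₀ + t • 1) ^ p * y ^ q + y ^ q * (x₀ + t • 1) ^ p)
          - ((x₀ + t • 1) ^ p * y ^ q - y ^ q * (x₀ + t • 1) ^ p)) * b
        = b * (f ((x₀ + t • 1) ^ p * y ^ q + y ^ q * (x₀ + t • 1) ^ p)
          - ((x₀ + t • 1) ^ p * y ^ q - y ^ q * (x₀ + t • 1) ^ p)))
      (fun t ht => hmain _ (hmem t ht) y hy)
    obtain ⟨t₀, ht₀⟩ := hS.nonempty
    obtain ⟨-, hq0, -⟩ := ht₀.2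
    obtain ⟨c, hcp, hc⟩ := pow_expand x₀ (1 : B) p
    set Y := y ^ q with hY
    set F := f Y with hF
    set d : ℕ → B := fun k => (f (c k) * F + F * f (c k)) - (c k * Y - Y * c k) with hd
    have hstuff : ∀ t : ℝ,
        f ((x₀ + t • 1) ^ p * Y + Y * (x₀ + t • 1) ^ p)
          - ((x₀ + t • 1) ^ p * Y - Y * (x₀ + t • 1) ^ p)
        = ∑ k ∈ Finset.range (p + 1), t ^ k • d k := by
      intro t
      have hfu : f (∑ k ∈ Finset.range (p + 1), t ^ k • c k)
          = ∑ k ∈ Finset.range (p + 1), t ^ k • f (c k) := by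
        rw [hfsum]
        exact Finset.sum_congr rfl fun k _ => hsmulf _ _
      rw [hc t, hfadd, hfmul, hfmul, hfu]
      rw [Finset.sum_mul, Finset.mul_sum, Finset.sum_mul, Finset.mul_sum]
      simp only [smul_mul_assoc, mul_smul_comm]
      rw [← Finset.sum_add_distrib, ← Finset.sum_sub_distrib, ← Finset.sum_sub_distrib]
      exact Finset.sum_congr rfl fun k _ => by
        simp only [hd, hF, smul_sub, smul_add]
    have hFF : ∀ b : B, (F + F) * b = b * (F + F) := by
      intro b
      have hvan := vanish_coeffs p (fun k => d k * b - b * d k) _ hS ?_ p le_rfl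
      · have hdp : d p = F + F := by
          simp only [hd, hcp, one_pow, hf1, one_mul, mul_one, sub_self, sub_zero]
        have hvan2 : d p * b - b * d p = 0 := hvan
        rw [hdp] at hvan2
        exact sub_eq_zero.1 hvan2
      · intro t ht
        have hcomm := ht.2.2.2 b
        have hexp := hstuff t
        calc ∑ k ∈ Finset.range (p + 1), t ^ k • (d k * b - b * d k)
            = (∑ k ∈ Finset.range (p + 1), t ^ k • d k) * b
              - b * (∑ k ∈ Finset.range (p + 1), t ^ k • d k) := by
              rw [Finset.sum_mul, Finset.mul_sum, ← Finset.sum_sub_distrib]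
              exact Finset.sum_congr rfl fun k _ => by
                rw [smul_sub, smul_mul_assoc, mul_smul_comm]
          _ = 0 := by rw [← hexp, hcomm, sub_self]
    have hYc : ∀ b : B, Y * b = b * Y := hZf Y (hZtwo F hFF)
    exact ⟨q, hq0, hYc⟩
  -- Step 2: every element of B has a central power.
  have step2 : ∀ a : B, ∃ q : ℕ, 0 < q ∧ ∀ b : B, a ^ q * b = b * a ^ q := by
    intro a
    obtain ⟨y₀, hy₀⟩ := hH₂
    obtain ⟨ε, hε, hball⟩ := Metric.isOpen_iff.1 hH₂o y₀ hy₀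
    set δ := ε / (‖a‖ + 1) with hδ
    have hapos : (0 : ℝ) < ‖a‖ + 1 := by positivity
    have hδpos : 0 < δ := div_pos hε hapos
    have hmem : ∀ t ∈ Set.Ioo (-δ) δ, y₀ + t • a ∈ H₂ := by
      intro t ht
      apply hball
      rw [Metric.mem_ball, dist_eq_norm, add_sub_cancel_left, norm_smul, Real.norm_eq_abs]
      have habs : |t| < δ := abs_lt.2 ⟨ht.1, ht.2⟩
      have h1 : |t| * ‖a‖ ≤ |t| * (‖a‖ + 1) := by
        apply mul_le_mul_of_nonneg_left (by linarith) (abs_nonneg t)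
      have h2 := mul_lt_mul_of_pos_right habs hapos
      rw [hδ, div_mul_cancel₀ _ (ne_of_gt hapos)] at h2
      linarith
    obtain ⟨p', q, hS⟩ := pigeon_aux (Ioo_not_countable (show -δ < δ by linarith))
      (fun t _ q => 0 < q ∧ ∀ b : B, (y₀ + t • a) ^ q * b = b * (y₀ + t • a) ^ q)
      (fun t ht => by
        obtain ⟨q, hq⟩ := step1 _ (hmem t ht)
        exact ⟨1, q, hq⟩)
    obtain ⟨c, hcq, hc⟩ := pow_expand y₀ a q
    obtain ⟨t₀, ht₀⟩ := hS.nonempty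
    refine ⟨q, ht₀.2.1, ?_⟩
    intro b
    have hvan := vanish_coeffs q (fun k => c k * b - b * c k) _ hS ?_ q le_rfl
    · have hvan2 : c q * b - b * c q = 0 := hvan
      rw [hcq] at hvan2
      exact sub_eq_zero.1 hvan2
    · intro t ht
      have hcomm := ht.2.2 b
      rw [hc t] at hcomm
      calc ∑ k ∈ Finset.range (q + 1), t ^ k • (c k * b - b * c k)
          = (∑ k ∈ Finset.range (q + 1), t ^ k • c k) * b
            - b * (∑ k ∈ Finset.range (q + 1), t ^ k • c k) := by
            rw [Finset.sum_mul, Finset.mul_sum, ← Finset.sum_sub_distrib]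
            exact Finset.sum_congr rfl fun k _ => by
              rw [smul_sub, smul_mul_assoc, mul_smul_comm]
        _ = 0 := by rw [hcomm, sub_self]
  -- Step 3: every element of B is central.
  intro x y
  obtain ⟨p', q, hS⟩ := pigeon_aux (Ioo_not_countable (zero_lt_one))
    (fun t _ q => 0 < q ∧ ∀ b : B, (x + t • 1) ^ q * b = b * (x + t • 1) ^ q)
    (fun t _ => by
      obtain ⟨q, hq⟩ := step2 (x + t • 1)
      exact ⟨1, q, hq⟩)
  obtain ⟨t₀, ht₀⟩ := hS.nonempty
  have hq0 : 0 < q := ht₀.2.1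
  have hvan := vanish_coeffs q (fun j => ((q.choose (q - j)) • x ^ (q - j)) * y
      - y * ((q.choose (q - j)) • x ^ (q - j))) _ hS ?_ (q - 1) (by omega)
  · have hvan2 : ((q.choose (q - (q - 1))) • x ^ (q - (q - 1))) * y
        - y * ((q.choose (q - (q - 1))) • x ^ (q - (q - 1))) = 0 := hvan
    have h1 : q - (q - 1) = 1 := by omega
    rw [h1, Nat.choose_one_right, pow_one] at hvan2
    have h2 : (q • x) * y = y * (q • x) := sub_eq_zero.1 hvan2
    have h3 : (q : ℝ) • (x * y) = (q : ℝ) • (y * x) := by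
      rw [Nat.cast_smul_eq_nsmul, Nat.cast_smul_eq_nsmul, ← smul_mul_assoc, ← mul_smul_comm, h2]
    exact hcancel (q : ℝ) (Nat.cast_ne_zero.2 (Nat.pos_iff_ne_zero.1 hq0)) _ _ h3
  · intro t ht
    have hcomm := ht.2.2 y
    rw [pow_expand_one x q t] at hcomm
    calc ∑ j ∈ Finset.range (q + 1),
          t ^ j • (((q.choose (q - j)) • x ^ (q - j)) * y - y * ((q.choose (q - j)) • x ^ (q - j)))
        = (∑ j ∈ Finset.range (q + 1), t ^ j • ((q.choose (q - j)) • x ^ (q - j))) * y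
          - y * (∑ j ∈ Finset.range (q + 1), t ^ j • ((q.choose (q - j)) • x ^ (q - j))) := by
          rw [Finset.sum_mul, Finset.mul_sum, ← Finset.sum_sub_distrib]
          exact Finset.sum_congr rfl fun k _ => by
            simp [smul_sub, smul_mul_assoc, mul_smul_comm]
      _ = 0 := by rw [hcomm, sub_self]
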